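/- Let $\xi_1,\dots,\xi_9$ be elements of a commutative $\mathbb{Q}$-algebra with $\sum_i \xi_i = 0$, set $s_m = \sum_{i=1}^9 \xi_i^m$, and define $I_n = \sum_{i<j}\big((\xi_i-\xi_j)^n + (\xi_j-\xi_i)^n\big) + \sum_{i<j<k}\big((\xi_i+\xi_j+\xi_k)^n + (-\xi_i-\xi_j-\xi_k)^n\big)$. Then for every even $n \ge 2$, $I_n = \sum_{i=0}^n \binom{n}{i}(-1)^{n-i} s_i s_{n-i} + 2\cdot 3^{n-1} s_n - \sum_{i=0}^n \binom{n}{i} 2^{n-i} s_i s_{n-i} + \tfrac{1}{3}\sum_{i=0}^n\sum_{j=0}^{n-i}\binom{n}{i}\binom{n-i}{j} s_i s_j s_{n-i-j}$. -/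

import Mathlib

open Finset

/-- Power sums `s_m = ∑_{i=1}^9 ξ_i^m`. -/
def psum {A : Type*} [CommRing A] (ξ : Fin 9 → A) (m : ℕ) : A :=
  ∑ i : Fin 9, ξ i ^ m

lemma ioiSum {M : Type*} [AddCommMonoid M] (g : Fin 9 → Fin 9 → M) :
    ∑ i, ∑ j ∈ Finset.Ioi i, g i j = ∑ i, ∑ j, if i < j then g i j else 0 := by
  refine Finset.sum_congr rfl fun i _ => ?_
  rw [show Finset.Ioi i = univ.filter (fun j => i < j) by ext; simp, Finset.sum_filter]

lemma pair_split {M : Type*} [AddCommMonoid M] (f : Fin 9 → Fin 9 → M) :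
    ∑ i, ∑ j, f i j
      = (∑ i, ∑ j ∈ Finset.Ioi i, (f i j + f j i)) + ∑ i, f i i := by
  have key : ∀ i j : Fin 9, f i j
      = (if i < j then f i j else 0) + (if j < i then f i j else 0)
        + (if i = j then f i j else 0) := by
    intro i j
    rcases lt_trichotomy i j with h | rfl | h
    · simp [h, h.not_gt, h.ne]
    · simp
    · simp [h, h.not_gt, h.ne']
  calc ∑ i, ∑ j, f i j
      = ∑ i, ∑ j, ((if i < j then f i j else 0) + (if j < i then f i j else 0)
          + (if i = j then f i j else 0)) := by
        exact Finset.sum_congr rfl fun i _ => Finset.sum_congr rfl fun j _ => key i j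
    _ = ((∑ i, ∑ j, if i < j then f i j else 0) + ∑ i, ∑ j, if j < i then f i j else 0)
          + ∑ i, ∑ j, if i = j then f i j else 0 := by
        simp [Finset.sum_add_distrib]
    _ = (∑ i, ∑ j ∈ Finset.Ioi i, (f i j + f j i)) + ∑ i, f i i := by
        rw [Finset.sum_comm (f := fun i j => if j < i then f i j else 0)]
        simp only [Finset.sum_ite_eq, Finset.mem_univ, if_true]
        rw [ioiSum]
        simp only [← Finset.sum_add_distrib, ite_add_ite, add_zero]
lemma ioiSum3 {M : Type*} [AddCommMonoid M] (g : Fin 9 → Fin 9 → Fin 9 → M) :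
    ∑ i, ∑ j ∈ Finset.Ioi i, ∑ k ∈ Finset.Ioi j, g i j k
      = ∑ i, ∑ j, ∑ k, if i < j then if j < k then g i j k else 0 else 0 := by
  rw [ioiSum (g := fun i j => ∑ k ∈ Finset.Ioi j, g i j k)]
  refine Finset.sum_congr rfl fun i _ => Finset.sum_congr rfl fun j _ => ?_
  split_ifs with h
  · rw [show Finset.Ioi j = univ.filter (fun k => j < k) by ext; simp, Finset.sum_filter]
  · simp

lemma triple_split {M : Type*} [AddCommMonoid M] (f : Fin 9 → Fin 9 → Fin 9 → M) :
    ∑ i, ∑ j, ∑ k, f i j k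
      = (∑ i, ∑ j ∈ Finset.Ioi i, ∑ k ∈ Finset.Ioi j,
          (f i j k + f i k j + f j i k + f j k i + f k i j + f k j i))
        + (∑ i, ∑ j ∈ Finset.Ioi i,
          (f i i j + f i j i + f j i i + f i j j + f j i j + f j j i))
        + ∑ i, f i i i := by
  have key : ∀ i j k : Fin 9, f i j k
      = ((if i < j then if j < k then f i j k else 0 else 0)
        + (if i < k then if k < j then f i j k else 0 else 0)
        + (if j < i then if i < k then f i j k else 0 else 0)
        + (if j < k then if k < i then f i j k else 0 else 0)
        + (if k < i then if i < j then f i j k else 0 else 0)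
        + (if k < j then if j < i then f i j k else 0 else 0))
        + ((if i = j then if j < k then f i j k else 0 else 0)
        + (if i = k then if i < j then f i j k else 0 else 0)
        + (if j = k then if j < i then f i j k else 0 else 0)
        + (if j = k then if i < j then f i j k else 0 else 0)
        + (if i = k then if j < i then f i j k else 0 else 0)
        + (if i = j then if k < j then f i j k else 0 else 0))
        + (if i = j then if j = k then f i j k else 0 else 0) := by
    intro i j k
    rcases lt_trichotomy i j with h1 | h1 | h1 <;>
      rcases lt_trichotomy j k with h2 | h2 | h2 <;>
      rcases lt_trichotomy i k with h3 | h3 | h3 <;>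
      (try subst h1) <;> (try subst h2) <;> (try subst h3)
    all_goals
      first
        | (exfalso; omega)
        | simp [h1, h2, h3, h1.not_gt, h2.not_gt, h3.not_gt,
            h1.ne, h1.ne', h2.ne, h2.ne', h3.ne, h3.ne']
        | simp [h1, h2, h1.not_gt, h2.not_gt, h1.ne, h1.ne', h2.ne, h2.ne']
        | simp [h1, h3, h1.not_gt, h3.not_gt, h1.ne, h1.ne', h3.ne, h3.ne']
        | simp [h2, h3, h2.not_gt, h3.not_gt, h2.ne, h2.ne', h3.ne, h3.ne']
        | simp [h1, h1.not_gt, h1.ne, h1.ne']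
        | simp [h2, h2.not_gt, h2.ne, h2.ne']
        | simp [h3, h3.not_gt, h3.ne, h3.ne']
        | simp

  have hs1 : (∑ i : Fin 9, ∑ j : Fin 9, ∑ k : Fin 9, if i < j then if j < k then f i j k else 0 else 0)
      = ∑ i, ∑ j ∈ Finset.Ioi i, ∑ k ∈ Finset.Ioi j, f i j k := (ioiSum3 f).symm
  have hs2 : (∑ i : Fin 9, ∑ j : Fin 9, ∑ k : Fin 9, if i < k then if k < j then f i j k else 0 else 0)
      = ∑ i, ∑ j ∈ Finset.Ioi i, ∑ k ∈ Finset.Ioi j, f i k j := by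
    rw [ioiSum3 (fun a b c => f a c b)]
    exact Finset.sum_congr rfl fun i _ => Finset.sum_comm
  have hs3 : (∑ i : Fin 9, ∑ j : Fin 9, ∑ k : Fin 9, if j < i then if i < k then f i j k else 0 else 0)
      = ∑ i, ∑ j ∈ Finset.Ioi i, ∑ k ∈ Finset.Ioi j, f j i k := by
    rw [ioiSum3 (fun a b c => f b a c)]
    exact Finset.sum_comm
  have hs4 : (∑ i : Fin 9, ∑ j : Fin 9, ∑ k : Fin 9, if j < k then if k < i then f i j k else 0 else 0)
      = ∑ i, ∑ j ∈ Finset.Ioi i, ∑ k ∈ Finset.Ioi j, f k i j := by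
    rw [ioiSum3 (fun a b c => f c a b)]
    exact Finset.sum_comm.trans (Finset.sum_congr rfl fun _ _ => Finset.sum_comm)
  have hs5 : (∑ i : Fin 9, ∑ j : Fin 9, ∑ k : Fin 9, if k < i then if i < j then f i j k else 0 else 0)
      = ∑ i, ∑ j ∈ Finset.Ioi i, ∑ k ∈ Finset.Ioi j, f j k i := by
    rw [ioiSum3 (fun a b c => f b c a)]
    exact (Finset.sum_congr rfl fun _ _ => Finset.sum_comm).trans Finset.sum_comm
  have hs6 : (∑ i : Fin 9, ∑ j : Fin 9, ∑ k : Fin 9, if k < j then if j < i then f i j k else 0 else 0)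
      = ∑ i, ∑ j ∈ Finset.Ioi i, ∑ k ∈ Finset.Ioi j, f k j i := by
    rw [ioiSum3 (fun a b c => f c b a)]
    exact Finset.sum_comm.trans
      ((Finset.sum_congr rfl fun _ _ => Finset.sum_comm).trans Finset.sum_comm)
  have he1 : (∑ i : Fin 9, ∑ j : Fin 9, ∑ k : Fin 9, if i = j then if j < k then f i j k else 0 else 0)
      = ∑ i, ∑ j ∈ Finset.Ioi i, f i i j := by
    rw [ioiSum (fun a b => f a a b)]
    refine Finset.sum_congr rfl fun i _ => ?_
    rw [Finset.sum_comm]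
    refine Finset.sum_congr rfl fun k _ => ?_
    simp [Finset.sum_ite_eq]
  have he2 : (∑ i : Fin 9, ∑ j : Fin 9, ∑ k : Fin 9, if i = k then if i < j then f i j k else 0 else 0)
      = ∑ i, ∑ j ∈ Finset.Ioi i, f i j i := by
    rw [ioiSum (fun a b => f a b a)]
    refine Finset.sum_congr rfl fun i _ => Finset.sum_congr rfl fun j _ => ?_
    simp [Finset.sum_ite_eq]
  have he3 : (∑ i : Fin 9, ∑ j : Fin 9, ∑ k : Fin 9, if j = k then if j < i then f i j k else 0 else 0)
      = ∑ i, ∑ j ∈ Finset.Ioi i, f j i i := by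
    rw [ioiSum (fun a b => f b a a)]
    have : ∀ i j : Fin 9, (∑ k : Fin 9, if j = k then if j < i then f i j k else 0 else 0)
        = if j < i then f i j j else 0 := by
      intro i j; simp [Finset.sum_ite_eq]
    simp_rw [this]
    exact Finset.sum_comm
  have he4 : (∑ i : Fin 9, ∑ j : Fin 9, ∑ k : Fin 9, if j = k then if i < j then f i j k else 0 else 0)
      = ∑ i, ∑ j ∈ Finset.Ioi i, f i j j := by
    rw [ioiSum (fun a b => f a b b)]
    refine Finset.sum_congr rfl fun i _ => Finset.sum_congr rfl fun j _ => ?_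
    simp [Finset.sum_ite_eq]
  have he5 : (∑ i : Fin 9, ∑ j : Fin 9, ∑ k : Fin 9, if i = k then if j < i then f i j k else 0 else 0)
      = ∑ i, ∑ j ∈ Finset.Ioi i, f j i j := by
    rw [ioiSum (fun a b => f b a b)]
    have : ∀ i j : Fin 9, (∑ k : Fin 9, if i = k then if j < i then f i j k else 0 else 0)
        = if j < i then f i j i else 0 := by
      intro i j; simp [Finset.sum_ite_eq]
    simp_rw [this]
    exact Finset.sum_comm
  have he6 : (∑ i : Fin 9, ∑ j : Fin 9, ∑ k : Fin 9, if i = j then if k < j then f i j k else 0 else 0)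
      = ∑ i, ∑ j ∈ Finset.Ioi i, f j j i := by
    rw [ioiSum (fun a b => f b b a)]
    have : ∀ i : Fin 9, (∑ j : Fin 9, ∑ k : Fin 9, if i = j then if k < j then f i j k else 0 else 0)
        = ∑ k : Fin 9, if k < i then f i i k else 0 := by
      intro i
      rw [Finset.sum_comm]
      refine Finset.sum_congr rfl fun k _ => ?_
      simp [Finset.sum_ite_eq]
    simp_rw [this]
    exact Finset.sum_comm
  have hd : (∑ i : Fin 9, ∑ j : Fin 9, ∑ k : Fin 9, if i = j then if j = k then f i j k else 0 else 0)
      = ∑ i : Fin 9, f i i i := by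
    refine Finset.sum_congr rfl fun i _ => ?_
    rw [Finset.sum_comm]
    simp [Finset.sum_ite_eq]
  calc ∑ i, ∑ j, ∑ k, f i j k
      = ∑ i : Fin 9, ∑ j : Fin 9, ∑ k : Fin 9,
        (((if i < j then if j < k then f i j k else 0 else 0)
        + (if i < k then if k < j then f i j k else 0 else 0)
        + (if j < i then if i < k then f i j k else 0 else 0)
        + (if j < k then if k < i then f i j k else 0 else 0)
        + (if k < i then if i < j then f i j k else 0 else 0)
        + (if k < j then if j < i then f i j k else 0 else 0))
        + ((if i = j then if j < k then f i j k else 0 else 0)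
        + (if i = k then if i < j then f i j k else 0 else 0)
        + (if j = k then if j < i then f i j k else 0 else 0)
        + (if j = k then if i < j then f i j k else 0 else 0)
        + (if i = k then if j < i then f i j k else 0 else 0)
        + (if i = j then if k < j then f i j k else 0 else 0))
        + (if i = j then if j = k then f i j k else 0 else 0)) :=
        Finset.sum_congr rfl fun i _ => Finset.sum_congr rfl fun j _ =>
          Finset.sum_congr rfl fun k _ => key i j k
    _ = (∑ i, ∑ j ∈ Finset.Ioi i, ∑ k ∈ Finset.Ioi j,
          (f i j k + f i k j + f j i k + f j k i + f k i j + f k j i))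
        + (∑ i, ∑ j ∈ Finset.Ioi i,
          (f i i j + f i j i + f j i i + f i j j + f j i j + f j j i))
        + ∑ i, f i i i := by
        simp only [Finset.sum_add_distrib]
        rw [hs1, hs2, hs3, hs4, hs5, hs6, he1, he2, he3, he4, he5, he6, hd]
        abel

theorem stmt3 {A : Type*} [CommRing A] [Algebra ℚ A] (ξ : Fin 9 → A)
    (hsum : ∑ i : Fin 9, ξ i = 0) (n : ℕ) (hn : 2 ≤ n) (hne : Even n) :
    (∑ i : Fin 9, ∑ j ∈ Finset.Ioi i, ((ξ i - ξ j) ^ n + (ξ j - ξ i) ^ n))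
      + (∑ i : Fin 9, ∑ j ∈ Finset.Ioi i, ∑ k ∈ Finset.Ioi j,
          ((ξ i + ξ j + ξ k) ^ n + (-(ξ i) - ξ j - ξ k) ^ n))
    = (∑ i ∈ Finset.range (n + 1),
        (n.choose i : A) * (-1 : A) ^ (n - i) * psum ξ i * psum ξ (n - i))
      + 2 * 3 ^ (n - 1) * psum ξ n
      - (∑ i ∈ Finset.range (n + 1),
          (n.choose i : A) * 2 ^ (n - i) * psum ξ i * psum ξ (n - i))
      + (1/3 : ℚ) • (∑ i ∈ Finset.range (n + 1), ∑ j ∈ Finset.range (n - i + 1),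
          (n.choose i : A) * ((n - i).choose j : A)
            * psum ξ i * psum ξ j * psum ξ (n - i - j)) := by
  -- LHS pair part
  have hLpairs : (∑ i : Fin 9, ∑ j ∈ Finset.Ioi i, ((ξ i - ξ j) ^ n + (ξ j - ξ i) ^ n))
      = ∑ a : Fin 9, ∑ b : Fin 9, (ξ a - ξ b) ^ n := by
    have h := pair_split (fun a b => (ξ a - ξ b) ^ n)
    simp only [sub_self, zero_pow (show n ≠ 0 by omega), Finset.sum_const_zero, add_zero] at h
    exact h.symm
  -- LHS triple part
  have hLtrip : (∑ i : Fin 9, ∑ j ∈ Finset.Ioi i, ∑ k ∈ Finset.Ioi j,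
        ((ξ i + ξ j + ξ k) ^ n + (-(ξ i) - ξ j - ξ k) ^ n))
      = 2 * ∑ i : Fin 9, ∑ j ∈ Finset.Ioi i, ∑ k ∈ Finset.Ioi j, (ξ i + ξ j + ξ k) ^ n := by
    have h2 : ∀ i j k : Fin 9, (ξ i + ξ j + ξ k) ^ n + (-(ξ i) - ξ j - ξ k) ^ n
        = 2 * (ξ i + ξ j + ξ k) ^ n := by
      intro i j k
      rw [show -(ξ i) - ξ j - ξ k = -(ξ i + ξ j + ξ k) by ring, hne.neg_pow]
      ring
    simp_rw [h2]
    simp only [Finset.mul_sum]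
  -- first range sum
  have f4 : (∑ i ∈ Finset.range (n + 1),
        (n.choose i : A) * (-1 : A) ^ (n - i) * psum ξ i * psum ξ (n - i))
      = ∑ a : Fin 9, ∑ b : Fin 9, (ξ a - ξ b) ^ n := by
    have step : ∀ a b : Fin 9, (ξ a - ξ b) ^ n
        = ∑ i ∈ Finset.range (n + 1),
            (n.choose i : A) * (-1 : A) ^ (n - i) * (ξ a ^ i * ξ b ^ (n - i)) := by
      intro a b
      rw [sub_eq_add_neg, add_pow]
      refine Finset.sum_congr rfl fun i _ => ?_
      rw [neg_pow]
      ring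
    calc (∑ i ∈ Finset.range (n + 1),
          (n.choose i : A) * (-1 : A) ^ (n - i) * psum ξ i * psum ξ (n - i))
        = ∑ i ∈ Finset.range (n + 1), ∑ a : Fin 9, ∑ b : Fin 9,
            (n.choose i : A) * (-1 : A) ^ (n - i) * (ξ a ^ i * ξ b ^ (n - i)) := by
          refine Finset.sum_congr rfl fun i _ => ?_
          simp only [psum]
          rw [mul_assoc, Finset.sum_mul_sum, Finset.mul_sum]
          exact Finset.sum_congr rfl fun a _ => Finset.mul_sum _ _ _
      _ = ∑ a : Fin 9, ∑ b : Fin 9, ∑ i ∈ Finset.range (n + 1),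
            (n.choose i : A) * (-1 : A) ^ (n - i) * (ξ a ^ i * ξ b ^ (n - i)) := by
          rw [Finset.sum_comm]
          exact Finset.sum_congr rfl fun a _ => Finset.sum_comm
      _ = ∑ a : Fin 9, ∑ b : Fin 9, (ξ a - ξ b) ^ n :=
          Finset.sum_congr rfl fun a _ => Finset.sum_congr rfl fun b _ => (step a b).symm
  -- second range sum
  have f5 : (∑ i ∈ Finset.range (n + 1),
        (n.choose i : A) * 2 ^ (n - i) * psum ξ i * psum ξ (n - i))
      = ∑ a : Fin 9, ∑ b : Fin 9, (ξ a + ξ a + ξ b) ^ n := by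
    have step : ∀ a b : Fin 9, (ξ a + 2 * ξ b) ^ n
        = ∑ i ∈ Finset.range (n + 1),
            (n.choose i : A) * 2 ^ (n - i) * (ξ a ^ i * ξ b ^ (n - i)) := by
      intro a b
      rw [add_pow]
      refine Finset.sum_congr rfl fun i _ => ?_
      rw [mul_pow]
      ring
    calc (∑ i ∈ Finset.range (n + 1),
          (n.choose i : A) * 2 ^ (n - i) * psum ξ i * psum ξ (n - i))
        = ∑ i ∈ Finset.range (n + 1), ∑ a : Fin 9, ∑ b : Fin 9,
            (n.choose i : A) * 2 ^ (n - i) * (ξ a ^ i * ξ b ^ (n - i)) := by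
          refine Finset.sum_congr rfl fun i _ => ?_
          simp only [psum]
          rw [mul_assoc, Finset.sum_mul_sum, Finset.mul_sum]
          exact Finset.sum_congr rfl fun a _ => Finset.mul_sum _ _ _
      _ = ∑ a : Fin 9, ∑ b : Fin 9, ∑ i ∈ Finset.range (n + 1),
            (n.choose i : A) * 2 ^ (n - i) * (ξ a ^ i * ξ b ^ (n - i)) := by
          rw [Finset.sum_comm]
          exact Finset.sum_congr rfl fun a _ => Finset.sum_comm
      _ = ∑ a : Fin 9, ∑ b : Fin 9, (ξ a + 2 * ξ b) ^ n :=
          Finset.sum_congr rfl fun a _ => Finset.sum_congr rfl fun b _ => (step a b).symm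
      _ = ∑ a : Fin 9, ∑ b : Fin 9, (ξ a + ξ a + ξ b) ^ n := by
          rw [Finset.sum_comm]
          refine Finset.sum_congr rfl fun a _ => Finset.sum_congr rfl fun b _ => ?_
          congr 1
          ring
  -- binomial pair expansion, general exponent
  have pairExp : ∀ m : ℕ, (∑ j ∈ Finset.range (m + 1),
        ((m.choose j : A)) * psum ξ j * psum ξ (m - j))
      = ∑ b : Fin 9, ∑ c : Fin 9, (ξ b + ξ c) ^ m := by
    intro m
    calc (∑ j ∈ Finset.range (m + 1), ((m.choose j : A)) * psum ξ j * psum ξ (m - j))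
        = ∑ j ∈ Finset.range (m + 1), ∑ b : Fin 9, ∑ c : Fin 9,
            ξ b ^ j * ξ c ^ (m - j) * (m.choose j : A) := by
          refine Finset.sum_congr rfl fun j _ => ?_
          simp only [psum]
          rw [mul_assoc, Finset.sum_mul_sum, Finset.mul_sum]
          exact Finset.sum_congr rfl fun b _ =>
            (Finset.mul_sum _ _ _).trans (Finset.sum_congr rfl fun c _ => by ring)
      _ = ∑ b : Fin 9, ∑ c : Fin 9, ∑ j ∈ Finset.range (m + 1),
            ξ b ^ j * ξ c ^ (m - j) * (m.choose j : A) := by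
          rw [Finset.sum_comm]
          exact Finset.sum_congr rfl fun b _ => Finset.sum_comm
      _ = ∑ b : Fin 9, ∑ c : Fin 9, (ξ b + ξ c) ^ m :=
          Finset.sum_congr rfl fun b _ => Finset.sum_congr rfl fun c _ => (add_pow _ _ _).symm
  -- the big double range sum
  have f6 : (∑ i ∈ Finset.range (n + 1), ∑ j ∈ Finset.range (n - i + 1),
        (n.choose i : A) * ((n - i).choose j : A)
          * psum ξ i * psum ξ j * psum ξ (n - i - j))
      = ∑ a : Fin 9, ∑ b : Fin 9, ∑ c : Fin 9, (ξ a + ξ b + ξ c) ^ n := by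
    calc (∑ i ∈ Finset.range (n + 1), ∑ j ∈ Finset.range (n - i + 1),
          (n.choose i : A) * ((n - i).choose j : A)
            * psum ξ i * psum ξ j * psum ξ (n - i - j))
        = ∑ i ∈ Finset.range (n + 1), ∑ a : Fin 9, ∑ b : Fin 9, ∑ c : Fin 9,
            ξ c ^ i * (ξ a + ξ b) ^ (n - i) * (n.choose i : A) := by
          refine Finset.sum_congr rfl fun i _ => ?_
          rw [show (∑ j ∈ Finset.range (n - i + 1),
                (n.choose i : A) * ((n - i).choose j : A)
                  * psum ξ i * psum ξ j * psum ξ (n - i - j))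
              = (n.choose i : A) * psum ξ i
                  * ∑ j ∈ Finset.range (n - i + 1),
                      (((n - i).choose j : A)) * psum ξ j * psum ξ (n - i - j) from by
            rw [Finset.mul_sum]
            exact Finset.sum_congr rfl fun j _ => by ring]
          rw [pairExp (n - i)]
          simp only [psum, Finset.mul_sum, Finset.sum_mul]
          exact Finset.sum_congr rfl fun a _ => Finset.sum_congr rfl fun b _ =>
            Finset.sum_congr rfl fun c _ => by ring
      _ = ∑ a : Fin 9, ∑ b : Fin 9, ∑ c : Fin 9, ∑ i ∈ Finset.range (n + 1),
            ξ c ^ i * (ξ a + ξ b) ^ (n - i) * (n.choose i : A) := by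
          rw [Finset.sum_comm]
          refine Finset.sum_congr rfl fun a _ => ?_
          rw [Finset.sum_comm]
          refine Finset.sum_congr rfl fun b _ => ?_
          rw [Finset.sum_comm]
      _ = ∑ a : Fin 9, ∑ b : Fin 9, ∑ c : Fin 9, (ξ a + ξ b + ξ c) ^ n := by
          refine Finset.sum_congr rfl fun a _ => Finset.sum_congr rfl fun b _ =>
            Finset.sum_congr rfl fun c _ => ?_
          conv_rhs => rw [show ξ a + ξ b + ξ c = ξ c + (ξ a + ξ b) by ring, add_pow]
  -- triple split of the full triple sum
  have tsp := triple_split (fun a b c => (ξ a + ξ b + ξ c) ^ n)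
  have hch : (∑ i : Fin 9, ∑ j ∈ Finset.Ioi i, ∑ k ∈ Finset.Ioi j,
        ((ξ i + ξ j + ξ k) ^ n + (ξ i + ξ k + ξ j) ^ n + (ξ j + ξ i + ξ k) ^ n
          + (ξ j + ξ k + ξ i) ^ n + (ξ k + ξ i + ξ j) ^ n + (ξ k + ξ j + ξ i) ^ n))
      = 6 * ∑ i : Fin 9, ∑ j ∈ Finset.Ioi i, ∑ k ∈ Finset.Ioi j, (ξ i + ξ j + ξ k) ^ n := by
    simp only [Finset.mul_sum]
    refine Finset.sum_congr rfl fun i _ => Finset.sum_congr rfl fun j _ =>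
      Finset.sum_congr rfl fun k _ => by ring
  have hpr : (∑ i : Fin 9, ∑ j ∈ Finset.Ioi i,
        ((ξ i + ξ i + ξ j) ^ n + (ξ i + ξ j + ξ i) ^ n + (ξ j + ξ i + ξ i) ^ n
          + (ξ i + ξ j + ξ j) ^ n + (ξ j + ξ i + ξ j) ^ n + (ξ j + ξ j + ξ i) ^ n))
      = 3 * ∑ i : Fin 9, ∑ j ∈ Finset.Ioi i,
          ((ξ i + ξ i + ξ j) ^ n + (ξ j + ξ j + ξ i) ^ n) := by
    simp only [Finset.mul_sum]
    refine Finset.sum_congr rfl fun i _ => Finset.sum_congr rfl fun j _ => by ring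
  have hE : (∑ i : Fin 9, (ξ i + ξ i + ξ i) ^ n) = 3 * ((3 : A) ^ (n - 1) * psum ξ n) := by
    have step : ∀ i : Fin 9, (ξ i + ξ i + ξ i) ^ n = 3 * ((3 : A) ^ (n - 1) * ξ i ^ n) := by
      intro i
      calc (ξ i + ξ i + ξ i) ^ n = ((3 : A) * ξ i) ^ n := by congr 1; ring
        _ = (3 : A) ^ n * ξ i ^ n := mul_pow _ _ _
        _ = 3 * ((3 : A) ^ (n - 1) * ξ i ^ n) := by
            have h3n : (3 : A) ^ n = 3 * (3 : A) ^ (n - 1) := by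
              conv_lhs => rw [show n = (n - 1) + 1 by omega]
              rw [pow_succ]
              ring
            rw [h3n]
            ring
    simp_rw [step]
    simp only [psum, Finset.mul_sum]
  have psp := pair_split (fun a b => (ξ a + ξ a + ξ b) ^ n)
  -- Tall = 3 * (2S + D - 2F)
  have hTall3 : (∑ a : Fin 9, ∑ b : Fin 9, ∑ c : Fin 9, (ξ a + ξ b + ξ c) ^ n)
      = 3 * (2 * (∑ i : Fin 9, ∑ j ∈ Finset.Ioi i, ∑ k ∈ Finset.Ioi j, (ξ i + ξ j + ξ k) ^ n)
          + (∑ a : Fin 9, ∑ b : Fin 9, (ξ a + ξ a + ξ b) ^ n)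
          - 2 * ((3 : A) ^ (n - 1) * psum ξ n)) := by
    rw [tsp, hch, hpr, hE]
    rw [hE] at psp
    linear_combination (-3 : A) * psp
  have smul13 : (1/3 : ℚ) • (∑ a : Fin 9, ∑ b : Fin 9, ∑ c : Fin 9, (ξ a + ξ b + ξ c) ^ n)
      = 2 * (∑ i : Fin 9, ∑ j ∈ Finset.Ioi i, ∑ k ∈ Finset.Ioi j, (ξ i + ξ j + ξ k) ^ n)
        + (∑ a : Fin 9, ∑ b : Fin 9, (ξ a + ξ a + ξ b) ^ n)
        - 2 * ((3 : A) ^ (n - 1) * psum ξ n) := by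
    rw [hTall3]
    rw [show (3 : A) * (2 * (∑ i : Fin 9, ∑ j ∈ Finset.Ioi i, ∑ k ∈ Finset.Ioi j,
          (ξ i + ξ j + ξ k) ^ n)
        + (∑ a : Fin 9, ∑ b : Fin 9, (ξ a + ξ a + ξ b) ^ n)
        - 2 * ((3 : A) ^ (n - 1) * psum ξ n))
      = (3 : ℚ) • (2 * (∑ i : Fin 9, ∑ j ∈ Finset.Ioi i, ∑ k ∈ Finset.Ioi j,
          (ξ i + ξ j + ξ k) ^ n)
        + (∑ a : Fin 9, ∑ b : Fin 9, (ξ a + ξ a + ξ b) ^ n)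
        - 2 * ((3 : A) ^ (n - 1) * psum ξ n)) from by
      rw [Algebra.smul_def, map_ofNat]]
    rw [smul_smul]
    norm_num
  rw [hLpairs, hLtrip, f4, f5, f6, smul13]
  ring
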